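/- Let C be a nonempty binary code of length n ≥ 2 (a set of vectors in F_2^n, not necessarily linear) in which every codeword has even Hamming weight, and suppose C has covering radius ρ ≥ 1. Then for any fixed coordinate position, the punctured code obtained by deleting that coordinate from every codeword of C has covering radius exactly ρ − 1. -/

import Mathlib

open Finset

private lemma zmod2_add_self : ∀ t : ZMod 2, t + t = 0 := by decide

private lemma zmod2_ite (a : ZMod 2) : (if a ≠ 0 then (1 : ZMod 2) else 0) = a := by
  revert a; decide

private lemma cast_hammingNorm {ι : Type*} [Fintype ι] (v : ι → ZMod 2) :
    (hammingNorm v : ZMod 2) = ∑ j, v j := by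
  unfold hammingNorm
  rw [Finset.card_filter]
  push_cast
  exact Finset.sum_congr rfl fun j _ => by simpa using zmod2_ite (v j)

private lemma sum_split {n : ℕ} (i : Fin n) {M : Type*} [AddCommMonoid M] (F : Fin n → M) :
    ∑ j, F j = F i + ∑ j : {j : Fin n // j ≠ i}, F j.1 := by
  rw [Fintype.sum_eq_add_sum_compl i]
  congr 1
  exact (Finset.sum_subtype (s := {i}ᶜ) (p := fun j => j ≠ i)
    (fun j => by simp [Finset.mem_compl]) F)

private lemma dist_split {n : ℕ} (i : Fin n) (x c : Fin n → ZMod 2) :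
    hammingDist x c
      = (if x i ≠ c i then 1 else 0)
        + hammingDist (fun j : {j : Fin n // j ≠ i} => x j.1)
            (fun j : {j : Fin n // j ≠ i} => c j.1) := by
  unfold hammingDist
  rw [Finset.card_filter, Finset.card_filter, sum_split i]

/-- If every codeword of a nonempty binary code C of length n ≥ 2 has even
Hamming weight and C has covering radius ρ ≥ 1, then puncturing C at any
fixed coordinate yields a code of covering radius exactly ρ − 1. -/
theorem stmt_10 (n : ℕ) (hn : 2 ≤ n) (C : Set (Fin n → ZMod 2)) (hC : C.Nonempty)
    (heven : ∀ c ∈ C, Even (hammingNorm c)) (ρ : ℕ) (hρ : 1 ≤ ρ)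
    (hcov : sSup {r : ℕ | ∃ x : Fin n → ZMod 2,
        r = sInf {d : ℕ | ∃ c ∈ C, d = hammingDist x c}} = ρ)
    (i : Fin n) :
    sSup {r : ℕ | ∃ x : {j : Fin n // j ≠ i} → ZMod 2,
        r = sInf {d : ℕ | ∃ w ∈ {w : {j : Fin n // j ≠ i} → ZMod 2 |
              ∃ c ∈ C, ∀ j : {j : Fin n // j ≠ i}, w j = c j.1},
            d = hammingDist x w}} = ρ - 1 := by
  classical
  obtain ⟨c₀, hc₀⟩ := hC
  -- cast of even-weight codewords is 0
  have hcast0 : ∀ c ∈ C, ((hammingNorm c : ZMod 2) = 0) := by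
    intro c hc
    obtain ⟨k, hk⟩ := heven c hc
    rw [hk]
    push_cast
    exact zmod2_add_self _
  -- distances from x to codewords have parity determined by x
  have hparity : ∀ (x : Fin n → ZMod 2), ∀ c ∈ C,
      (hammingDist x c : ZMod 2) = ∑ j, x j := by
    intro x c hc
    rw [hammingDist_eq_hammingNorm, cast_hammingNorm]
    have h1 : ∑ j, (x - c) j = ∑ j, x j - ∑ j, c j := by
      simp [Finset.sum_sub_distrib]
    have h0 : ∑ j, (-x + c) j = ∑ j, (x - c) j := Finset.sum_congr rfl fun j _ => by
      simp only [Pi.add_apply, Pi.neg_apply, Pi.sub_apply]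
      generalize x j = a; generalize c j = b; revert a b; decide
    rw [h0, h1, ← cast_hammingNorm c, hcast0 c hc, ← cast_hammingNorm x, sub_zero,
      cast_hammingNorm x]
  -- basic facts about f
  have hfne : ∀ x : Fin n → ZMod 2,
      ({d : ℕ | ∃ c ∈ C, d = hammingDist x c}).Nonempty :=
    fun x => ⟨hammingDist x c₀, c₀, hc₀, rfl⟩
  have hf_le : ∀ (x : Fin n → ZMod 2), ∀ c ∈ C,
      sInf {d : ℕ | ∃ c ∈ C, d = hammingDist x c} ≤ hammingDist x c :=
    fun x c hc => Nat.sInf_le ⟨c, hc, rfl⟩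
  -- S is bounded above by n
  have hSbdd : ∀ r ∈ {r : ℕ | ∃ x : Fin n → ZMod 2,
      r = sInf {d : ℕ | ∃ c ∈ C, d = hammingDist x c}}, r ≤ n := by
    rintro r ⟨x, rfl⟩
    calc sInf {d : ℕ | ∃ c ∈ C, d = hammingDist x c} ≤ hammingDist x c₀ :=
        hf_le x c₀ hc₀
      _ ≤ Fintype.card (Fin n) := hammingDist_le_card_fintype
      _ = n := Fintype.card_fin n
  -- every f x ≤ ρ
  have hfρ : ∀ x : Fin n → ZMod 2,
      sInf {d : ℕ | ∃ c ∈ C, d = hammingDist x c} ≤ ρ := by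
    intro x
    rw [← hcov]
    exact le_csSup ⟨n, hSbdd⟩ ⟨x, rfl⟩
  -- some x₀ achieves ρ
  obtain ⟨x₀, hx₀⟩ : ∃ x₀ : Fin n → ZMod 2,
      ρ = sInf {d : ℕ | ∃ c ∈ C, d = hammingDist x₀ c} := by
    have := Nat.sSup_mem (s := {r : ℕ | ∃ x : Fin n → ZMod 2,
        r = sInf {d : ℕ | ∃ c ∈ C, d = hammingDist x c}})
      ⟨_, ⟨fun _ => 0, rfl⟩⟩ ⟨n, hSbdd⟩
    rwa [hcov] at this
  -- the punctured-code nonempty / inf facts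
  have hgne : ∀ x : {j : Fin n // j ≠ i} → ZMod 2,
      ({d : ℕ | ∃ w ∈ {w : {j : Fin n // j ≠ i} → ZMod 2 |
          ∃ c ∈ C, ∀ j : {j : Fin n // j ≠ i}, w j = c j.1},
        d = hammingDist x w}).Nonempty :=
    fun x => ⟨_, ⟨fun j => c₀ j.1, ⟨c₀, hc₀, fun _ => rfl⟩, rfl⟩⟩
  -- upper bound: g x' ≤ ρ - 1 for every x'
  have hub : ∀ x' : {j : Fin n // j ≠ i} → ZMod 2,
      sInf {d : ℕ | ∃ w ∈ {w : {j : Fin n // j ≠ i} → ZMod 2 |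
          ∃ c ∈ C, ∀ j : {j : Fin n // j ≠ i}, w j = c j.1},
        d = hammingDist x' w} ≤ ρ - 1 := by
    intro x'
    set b : ZMod 2 := (ρ : ZMod 2) + 1 + ∑ j : {j : Fin n // j ≠ i}, x' j with hb
    set x : Fin n → ZMod 2 := fun j => if h : j = i then b else x' ⟨j, h⟩ with hx
    have hres : (fun j : {j : Fin n // j ≠ i} => x j.1) = x' := by
      funext j; exact dif_neg j.2
    have hxi : x i = b := dif_pos rfl
    have hsum : ∑ j, x j = (ρ : ZMod 2) + 1 := by
      rw [sum_split i x, hxi, hres, hb, add_assoc, zmod2_add_self, add_zero]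
    -- pick the codeword achieving the inf for x
    obtain ⟨c, hc, hdc⟩ := Nat.sInf_mem (hfne x)
    have hne : hammingDist x c ≠ ρ := by
      intro h
      have := hparity x c hc
      rw [h, hsum] at this
      rw [left_eq_add] at this
      exact one_ne_zero this
    have hle : hammingDist x c ≤ ρ := by have := hfρ x; rwa [hdc] at this
    have hle' : hammingDist x c ≤ ρ - 1 := by omega
    have hsplit := dist_split i x c
    rw [hres] at hsplit
    have hmem : sInf {d : ℕ | ∃ w ∈ {w : {j : Fin n // j ≠ i} → ZMod 2 |
          ∃ c ∈ C, ∀ j : {j : Fin n // j ≠ i}, w j = c j.1},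
        d = hammingDist x' w} ≤ hammingDist x' (fun j : {j : Fin n // j ≠ i} => c j.1) :=
      Nat.sInf_le ⟨(fun j : {j : Fin n // j ≠ i} => c j.1), ⟨c, hc, fun _ => rfl⟩, rfl⟩
    have h2 : hammingDist x' (fun j : {j : Fin n // j ≠ i} => c j.1) ≤ hammingDist x c := by
      rw [hsplit]; exact Nat.le_add_left _ _
    exact hmem.trans (h2.trans hle')
  -- lower bound: g (res x₀) ≥ ρ - 1
  set x₀' : {j : Fin n // j ≠ i} → ZMod 2 := fun j => x₀ j.1 with hx₀'
  have hlb : ρ - 1 ≤ sInf {d : ℕ | ∃ w ∈ {w : {j : Fin n // j ≠ i} → ZMod 2 |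
          ∃ c ∈ C, ∀ j : {j : Fin n // j ≠ i}, w j = c j.1},
        d = hammingDist x₀' w} := by
    obtain ⟨w, ⟨c, hc, hw⟩, heq⟩ := Nat.sInf_mem (hgne x₀')
    have hwc : w = fun j : {j : Fin n // j ≠ i} => c j.1 := funext fun j => hw j
    have hsplit := dist_split i x₀ c
    have hρle : ρ ≤ hammingDist x₀ c := by rw [hx₀]; exact hf_le x₀ c hc
    rw [heq, hwc, hx₀']
    have hite : (if x₀ i ≠ c i then 1 else 0) ≤ 1 := by split_ifs <;> simp
    have hkey : ρ ≤ 1 + hammingDist (fun j : {j : Fin n // j ≠ i} => x₀ j.1)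
        (fun j : {j : Fin n // j ≠ i} => c j.1) :=
      hρle.trans (hsplit.le.trans (Nat.add_le_add_right hite _))
    rw [Nat.sub_le_iff_le_add, Nat.add_comm]
    exact hkey
  have hexact : sInf {d : ℕ | ∃ w ∈ {w : {j : Fin n // j ≠ i} → ZMod 2 |
          ∃ c ∈ C, ∀ j : {j : Fin n // j ≠ i}, w j = c j.1},
        d = hammingDist x₀' w} = ρ - 1 :=
    le_antisymm (hub x₀') hlb
  apply le_antisymm
  · refine csSup_le ⟨_, ⟨x₀', rfl⟩⟩ ?_
    rintro r ⟨y, rfl⟩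
    exact hub y
  · refine le_csSup ⟨ρ - 1, ?_⟩ ⟨x₀', hexact.symm⟩
    rintro r ⟨y, rfl⟩
    exact hub y
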